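/- Let L be a width-w decision list on n variables and let α ∈ (0,1) with αn an integer. Then the expectation over ρ drawn uniformly from restrictions in {0,1,*}^n with exactly αn stars of the number of useful indices in L↾ρ is at most (4/(1-α))^w. -/

import Mathlib

open Finset
open scoped Classical BigOperators

noncomputable section

/-- A term over `n` Boolean variables, given as a partial assignment:
`C i = some b` means the literal `x i = b` appears in the term. -/
abbrev Term (n : ℕ) := Fin n → Option Bool

/-- Satisfaction of a term by an assignment. -/
def TermSat {n : ℕ} (C : Term n) (x : Fin n → Bool) : Prop :=
  ∀ i b, C i = some b → x i = b

/-- Width of a term: the number of variables it mentions. -/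
def termWidth {n : ℕ} (C : Term n) : ℕ :=
  (Finset.univ.filter fun i => C i ≠ none).card

/-- The index function of a decision list with terms `C`:
the first index whose term is satisfied by `x` (and `m` conventionally if none,
since `sInf ∅ = 0`; the default rule hypothesis makes the set nonempty). -/
def DLind {n m : ℕ} (C : Fin m → Term n) (x : Fin n → Bool) : ℕ :=
  sInf {i : ℕ | ∃ h : i < m, TermSat (C ⟨i, h⟩) x}

/-- Evaluation of a decision list with terms `C` and values `v`. -/
def DLeval {n m : ℕ} {V : Type} [Inhabited V] (C : Fin m → Term n)
    (v : Fin m → V) (x : Fin n → Bool) : V :=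
  if h : DLind C x < m then v ⟨DLind C x, h⟩ else default

/-- Probability of an event under the uniform distribution on `{0,1}^n`. -/
def pr (n : ℕ) (P : (Fin n → Bool) → Prop) : ℝ :=
  ((Finset.univ.filter P).card : ℝ) / 2 ^ n

/-- Hit probability of index `i` in the decision list with terms `C`. -/
def pL {n m : ℕ} (C : Fin m → Term n) (i : ℕ) : ℝ :=
  pr n fun x => DLind C x = i

/-- The index function of the sub-decision-list `L|_J`. -/
def DLindSub {n m : ℕ} (C : Fin m → Term n) (J : Finset (Fin m)) (x : Fin n → Bool) : ℕ :=
  sInf {i : ℕ | ∃ h : i < m, (⟨i, h⟩ : Fin m) ∈ J ∧ TermSat (C ⟨i, h⟩) x}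

/-- Evaluation of the sub-decision-list `L|_J`. -/
def DLevalSub {n m : ℕ} {V : Type} [Inhabited V] (C : Fin m → Term n) (v : Fin m → V)
    (J : Finset (Fin m)) (x : Fin n → Bool) : V :=
  if h : DLindSub C J x < m then v ⟨DLindSub C J x, h⟩ else default

/-- A restriction: `some b` fixes a coordinate to `b`, `none` is a star. -/
abbrev Restriction (n : ℕ) := Fin n → Option Bool

/-- `x` is a completion of the restriction `ρ`. -/
def Compatible {n : ℕ} (ρ : Restriction n) (x : Fin n → Bool) : Prop :=
  ∀ i b, ρ i = some b → x i = b

/-- Number of stars of a restriction. -/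
def stars {n : ℕ} (ρ : Restriction n) : ℕ :=
  (Finset.univ.filter fun i => ρ i = none).card

/-- Weight of a restriction under the product distribution `U(n, α)`:
each coordinate independently `*` with probability `α`, and `0` or `1`
each with probability `(1-α)/2`. -/
def restW {n : ℕ} (α : ℝ) (ρ : Restriction n) : ℝ :=
  ∏ i : Fin n, if ρ i = none then α else (1 - α) / 2

/-- Index `i` is useful in the restricted decision list `L↾ρ`: some completion
of `ρ` hits rule `i`. -/
def Useful {n m : ℕ} (C : Fin m → Term n) (ρ : Restriction n) (i : Fin m) : Prop :=
  ∃ x, Compatible ρ x ∧ DLind C x = i.val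

/-- Number of useful indices of `L↾ρ`. -/
def useNum {n m : ℕ} (C : Fin m → Term n) (ρ : Restriction n) : ℕ :=
  (Finset.univ.filter fun i : Fin m => Useful C ρ i).card

/-- `q_L(α, i)`: probability over `ρ ~ U(n, α)` that index `i` is useful in `L↾ρ`. -/
def qL {n m : ℕ} (C : Fin m → Term n) (α : ℝ) (i : Fin m) : ℝ :=
  ∑ ρ : Restriction n, restW α ρ * (if Useful C ρ i then 1 else 0)

/-- Transition weight of the `β`-noise on a single bit. -/
def noiseW (β : ℝ) (a b : Bool) : ℝ := if a = b then (1 + β) / 2 else (1 - β) / 2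

/-- Joint density of `(x, y)` where `x` is uniform and `y ~ N_β(x)`. -/
def pairW {n : ℕ} (β : ℝ) (x y : Fin n → Bool) : ℝ :=
  (1 / 2) ^ n * ∏ i : Fin n, noiseW β (x i) (y i)

/-- `Stab_L(β, i) = Pr[Ind L(x) = Ind L(y) = i]` for `x` uniform, `y ~ N_β(x)`. -/
def StabInd {n m : ℕ} (C : Fin m → Term n) (β : ℝ) (i : Fin m) : ℝ :=
  ∑ x : Fin n → Bool, ∑ y : Fin n → Bool,
    pairW β x y * (if DLind C x = i.val ∧ DLind C y = i.val then 1 else 0)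

/-- `Stab_β(g) = Pr[g(x) = g(y) = 1]` for `x` uniform, `y ~ N_β(x)`. -/
def stab {n : ℕ} (β : ℝ) (g : (Fin n → Bool) → Bool) : ℝ :=
  ∑ x : Fin n → Bool, ∑ y : Fin n → Bool,
    pairW β x y * (if g x = true ∧ g y = true then 1 else 0)

/-- Probability weight that a uniform completion of `ρ` equals `x`. -/
def compW {n : ℕ} (ρ : Restriction n) (x : Fin n → Bool) : ℝ :=
  if Compatible ρ x then (1 / 2) ^ stars ρ else 0

/-- Evaluation of a DNF with terms `T`. -/
def DNFeval {n M : ℕ} (T : Fin M → Term n) (x : Fin n → Bool) : Prop :=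
  ∃ t, TermSat (T t) x

section Main
variable {n m : ℕ} (C : Fin m → Term n)

/-- vars of a term -/
def varsF (D : Term n) : Finset (Fin n) := univ.filter (fun t => D t ≠ none)

lemma card_varsF (D : Term n) : (varsF D).card = termWidth D := rfl

end Main

section Main2
variable {n m : ℕ} (C : Fin m → Term n) (hm : 0 < m)
  (hlast : C ⟨m - 1, Nat.sub_lt hm one_pos⟩ = fun _ => none)

def VG (i : Fin m) (σ : Restriction n) : Prop :=
  (∀ x, Compatible σ x → TermSat (C i) x) ∧ ∃ x, Compatible σ x ∧ DLind C x = i.val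

include hlast in
lemma dlind_sat (x : Fin n → Bool) :
    ∃ h : DLind C x < m, TermSat (C ⟨DLind C x, h⟩) x := by
  have hne : {i : ℕ | ∃ h : i < m, TermSat (C ⟨i, h⟩) x}.Nonempty := by
    refine ⟨m - 1, Nat.sub_lt hm one_pos, ?_⟩
    rw [hlast]; intro i b h; cases h
  exact Nat.sInf_mem hne

include hlast in
lemma VG_disj {i j : Fin m} {σ : Restriction n} (hi : VG C i σ) (hj : VG C j σ) : i = j := by
  by_contra hne
  rcases Nat.lt_or_ge i.val j.val with h | h
  · obtain ⟨x, hx, hxi⟩ := hj.2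
    have hsat : TermSat (C i) x := hi.1 x hx
    have : DLind C x ≤ i.val := Nat.sInf_le ⟨i.isLt, by simpa using hsat⟩
    omega
  · rcases Nat.lt_or_ge j.val i.val with h' | h'
    · obtain ⟨x, hx, hxi⟩ := hi.2
      have hsat : TermSat (C j) x := hj.1 x hx
      have : DLind C x ≤ j.val := Nat.sInf_le ⟨j.isLt, by simpa using hsat⟩
      omega
    · exact hne (Fin.ext (by omega))

end Main2

section Enc
variable {n m : ℕ} (C : Fin m → Term n) (hm : 0 < m)
  (hlast : C ⟨m - 1, Nat.sub_lt hm one_pos⟩ = fun _ => none)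

def Rset (n k : ℕ) : Finset (Restriction n) := univ.filter (fun ρ => stars ρ = k)

include hm hlast in
lemma enc (k : ℕ) (i : Fin m) :
    ((Rset n k).filter (fun ρ => Useful C ρ i)).card ≤
    (((varsF (C i)).powerset.filter (fun T => T.card ≤ k)).sigma
       (fun T => (Rset n (k - T.card)).filter (fun σ => VG C i σ))).card := by
  classical
  set S : Restriction n → Finset (Fin n) :=
    fun ρ => univ.filter (fun t => ρ t = none ∧ C i t ≠ none) with hS
  set F : Restriction n → (Σ _ : Finset (Fin n), Restriction n) :=
    fun ρ => ⟨S ρ, fun t => if t ∈ S ρ then C i t else ρ t⟩ with hF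
  apply Finset.card_le_card_of_injOn F
  · intro ρ hρ
    simp only [Rset, Finset.mem_coe, mem_filter, mem_univ, true_and] at hρ
    obtain ⟨hst, x, hx, hxi⟩ := hρ
    have hsat : TermSat (C i) x := by
      obtain ⟨h1, h2⟩ := dlind_sat C hm hlast x
      have he : (⟨DLind C x, h1⟩ : Fin m) = i := Fin.ext hxi
      rw [he] at h2; exact h2
    have hSsub : S ρ ⊆ varsF (C i) := by
      intro t ht; simp only [hS, mem_filter] at ht; simp [varsF, ht.2.2]
    have hSstars : S ρ ⊆ univ.filter (fun t => ρ t = none) := by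
      intro t ht; simp only [hS, mem_filter] at ht; simp [ht.2.1]
    have hScard : (S ρ).card ≤ k := by
      calc (S ρ).card ≤ _ := Finset.card_le_card hSstars
        _ = k := hst
    have hstars' : stars (F ρ).2 = k - (S ρ).card := by
      have hset : (univ.filter (fun t => (F ρ).2 t = none))
          = (univ.filter (fun t => ρ t = none)) \ S ρ := by
        ext t
        simp only [hF, mem_filter, mem_univ, true_and, mem_sdiff]
        by_cases ht : t ∈ S ρ
        · simp only [ht, if_true]
          have : C i t ≠ none := by simp only [hS, mem_filter] at ht; exact ht.2.2
          simp [this, ht]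
        · simp [ht]
      have hst' : (univ.filter fun t => ρ t = none).card = k := hst
      rw [stars, hset, Finset.card_sdiff_of_subset hSstars, hst']
    rw [Finset.mem_coe]
    refine Finset.mem_sigma.2 ⟨?_, ?_⟩
    · simp only [mem_filter, Finset.mem_powerset]
      exact ⟨hSsub, hScard⟩
    · simp only [Rset, mem_filter, mem_univ, true_and]
      refine ⟨hstars', ?_, ?_⟩
      · -- all completions of σ satisfy C i
        intro y hy t b hb
        by_cases ht : t ∈ S ρ
        · exact hy t b (by simp only [hF]; simp [ht, hb])
        · have hρt : ρ t ≠ none := by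
            intro hnone
            exact ht (by simp [hS, hnone, hb])
          obtain ⟨c, hc⟩ := Option.ne_none_iff_exists'.1 hρt
          have hyc : y t = c := hy t c (by simp only [hF]; simp [ht, hc])
          have hxc : x t = c := hx t c hc
          have hxb : x t = b := hsat t b hb
          rw [hyc, ← hxc, hxb]
      · refine ⟨x, ?_, hxi⟩
        intro t b hb
        simp only [hF] at hb
        by_cases ht : t ∈ S ρ
        · simp only [ht, if_true] at hb
          exact hsat t b hb
        · simp only [ht, if_false] at hb
          exact hx t b hb
  · intro ρ1 h1 ρ2 h2 heq
    have hrec : ∀ ρ, (fun t => if t ∈ S ρ then none else (F ρ).2 t) = ρ := by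
      intro ρ
      funext t
      by_cases ht : t ∈ S ρ
      · have : ρ t = none := by simp only [hS, mem_filter] at ht; exact ht.2.1
        simp [ht, this]
      · simp [hF, ht]
    have hs : S ρ1 = S ρ2 := congrArg Sigma.fst heq
    have hsnd : (F ρ1).2 = (F ρ2).2 := by
      have := congrArg Sigma.snd heq
      simpa using this
    rw [← hrec ρ1, ← hrec ρ2, hs, hsnd]
end Enc

section Count
variable {n m : ℕ} (C : Fin m → Term n) (hm : 0 < m)
  (hlast : C ⟨m - 1, Nat.sub_lt hm one_pos⟩ = fun _ => none)

lemma total_eq (k : ℕ) :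
    ∑ ρ ∈ Rset n k, useNum C ρ
      = ∑ i : Fin m, ((Rset n k).filter (fun ρ => Useful C ρ i)).card := by
  classical
  simp only [useNum, Finset.card_filter]
  rw [Finset.sum_comm]

include hm hlast in
lemma disj_sum (j : ℕ) :
    ∑ i : Fin m, ((Rset n j).filter (fun σ => VG C i σ)).card ≤ (Rset n j).card := by
  classical
  rw [← Finset.card_biUnion]
  · exact Finset.card_le_card (Finset.biUnion_subset.2 fun i _ => Finset.filter_subset _ _)
  · intro i _ j' _ hne
    simp only [Function.onFun]
    rw [Finset.disjoint_left]
    intro σ h1 h2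
    rw [mem_filter] at h1 h2
    exact hne (VG_disj C hm hlast h1.2 h2.2)

lemma powerset_sum_bound (w k : ℕ) (i : Fin m) (hwi : (varsF (C i)).card ≤ w) :
    (((varsF (C i)).powerset.filter (fun T => T.card ≤ k)).sigma
       (fun T => (Rset n (k - T.card)).filter (fun σ => VG C i σ))).card
    ≤ ∑ s ∈ range (w+1), w.choose s *
        (if s ≤ k then ((Rset n (k - s)).filter (fun σ => VG C i σ)).card else 0) := by
  classical
  rw [Finset.card_sigma]
  set g : ℕ → ℕ := fun s => ((Rset n (k - s)).filter (fun σ => VG C i σ)).card with hg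
  have h1 : ∑ T ∈ ((varsF (C i)).powerset.filter (fun T => T.card ≤ k)), g T.card
      = ∑ T ∈ (varsF (C i)).powerset, (if T.card ≤ k then g T.card else 0) :=
    (Finset.sum_filter _ _)
  rw [h1, Finset.sum_powerset]
  have h2 : ∀ j ∈ range ((varsF (C i)).card + 1),
      ∑ T ∈ powersetCard j (varsF (C i)), (if T.card ≤ k then g T.card else 0)
      = ((varsF (C i)).card.choose j) * (if j ≤ k then g j else 0) := by
    intro j _
    have hcon : ∀ T ∈ powersetCard j (varsF (C i)),
        (if T.card ≤ k then g T.card else 0) = (if j ≤ k then g j else 0) := by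
      intro T hT
      rw [(Finset.mem_powersetCard.1 hT).2]
    rw [Finset.sum_congr rfl hcon, Finset.sum_const, Finset.card_powersetCard, smul_eq_mul]
  rw [Finset.sum_congr rfl h2]
  calc ∑ j ∈ range ((varsF (C i)).card + 1),
        ((varsF (C i)).card.choose j) * (if j ≤ k then g j else 0)
      ≤ ∑ j ∈ range ((varsF (C i)).card + 1), w.choose j * (if j ≤ k then g j else 0) := by
        apply Finset.sum_le_sum
        intro j _
        exact Nat.mul_le_mul_right _ (Nat.choose_le_choose j hwi)
    _ ≤ ∑ j ∈ range (w+1), w.choose j * (if j ≤ k then g j else 0) := by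
        apply Finset.sum_le_sum_of_subset
        exact Finset.range_subset_range.2 (by omega)

include hm hlast in
lemma total_bound (w k : ℕ) (hw : ∀ j, termWidth (C j) ≤ w) :
    ∑ ρ ∈ Rset n k, useNum C ρ
      ≤ ∑ s ∈ range (w+1), w.choose s * (if s ≤ k then (Rset n (k-s)).card else 0) := by
  classical
  rw [total_eq]
  calc ∑ i : Fin m, ((Rset n k).filter (fun ρ => Useful C ρ i)).card
      ≤ ∑ i : Fin m, ∑ s ∈ range (w+1), w.choose s *
          (if s ≤ k then ((Rset n (k - s)).filter (fun σ => VG C i σ)).card else 0) := by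
        apply Finset.sum_le_sum
        intro i _
        exact le_trans (enc C hm hlast k i) (powerset_sum_bound C w k i (by
          rw [card_varsF]; exact hw i))
    _ = ∑ s ∈ range (w+1), ∑ i : Fin m, w.choose s *
          (if s ≤ k then ((Rset n (k - s)).filter (fun σ => VG C i σ)).card else 0) :=
        Finset.sum_comm
    _ ≤ ∑ s ∈ range (w+1), w.choose s * (if s ≤ k then (Rset n (k-s)).card else 0) := by
        apply Finset.sum_le_sum
        intro s _
        rw [← Finset.mul_sum]
        apply Nat.mul_le_mul_left
        by_cases hs : s ≤ k
        · simp only [hs, if_true]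
          exact disj_sum C hm hlast (k - s)
        · simp [hs]

end Count

lemma card_R (n j : ℕ) :
    ((Finset.univ.filter fun ρ : Restriction n => stars ρ = j)).card
      = n.choose j * 2 ^ (n - j) := by
  classical
  have hset : (Finset.univ.filter fun ρ : Restriction n => stars ρ = j)
      = (Finset.powersetCard j (univ : Finset (Fin n))).biUnion
          (fun T => Fintype.piFinset (fun i =>
            if i ∈ T then ({none} : Finset (Option Bool)) else {some false, some true})) := by
    ext ρ
    simp only [mem_filter, mem_univ, true_and, mem_biUnion, Finset.mem_powersetCard,
      Fintype.mem_piFinset]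
    constructor
    · rintro h
      refine ⟨univ.filter (fun i => ρ i = none), ⟨subset_univ _, h⟩, fun i => ?_⟩
      by_cases hi : ρ i = none <;> simp [hi] <;> cases h' : ρ i <;> simp_all
    · rintro ⟨T, ⟨-, hcard⟩, hmem⟩
      have : (univ.filter fun i => ρ i = none) = T := by
        ext i
        have := hmem i
        by_cases hi : i ∈ T <;> simp [hi] at this <;> simp [hi, this]
        · rcases this with h | h <;> simp [h]
      rw [stars, this, hcard]
  rw [hset, card_biUnion]
  · have : ∀ T ∈ Finset.powersetCard j (univ : Finset (Fin n)),
        (Fintype.piFinset (fun i =>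
          if i ∈ T then ({none} : Finset (Option Bool)) else {some false, some true})).card
        = 2 ^ (n - j) := by
      intro T hT
      rw [Finset.mem_powersetCard] at hT
      rw [Fintype.card_piFinset]
      have : ∀ i : Fin n, (if i ∈ T then ({none} : Finset (Option Bool)) else {some false, some true}).card
          = if i ∈ T then 1 else 2 := by
        intro i; by_cases hi : i ∈ T <;> simp [hi]
      simp only [this]
      rw [Finset.prod_ite, Finset.prod_const, Finset.prod_const]
      simp only [one_pow, one_mul]
      congr 1
      have h1 : (univ.filter fun i => i ∈ T) = T := by ext i; simp
      have h2 : (univ.filter fun i => i ∉ T).card = n - j := by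
        have := Finset.card_filter_add_card_filter_not (s := (univ : Finset (Fin n)))
          (p := fun i => i ∈ T)
        rw [h1] at this
        simp only [card_univ, Fintype.card_fin] at this
        omega
      rw [h2]
    rw [Finset.sum_congr rfl this, Finset.sum_const, Finset.card_powersetCard]
    simp [mul_comm]
  · intro T hT T' hT' hne
    simp only [Function.onFun]
    rw [Finset.disjoint_left]
    intro ρ h1 h2
    apply hne
    rw [Fintype.mem_piFinset] at h1 h2
    ext i
    have a1 := h1 i; have a2 := h2 i
    by_cases hi : i ∈ T <;> by_cases hi' : i ∈ T' <;>
      simp [hi, hi'] at a1 a2 ⊢ <;> simp_all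

section Arith

lemma choose_ratio (n k : ℕ) (hkn : k ≤ n) (r : ℝ) (hr : 0 ≤ r)
    (hkey : (k:ℝ) ≤ r * ((n:ℝ) - (k:ℝ))) :
    ∀ s, s ≤ k → (n.choose (k-s) : ℝ) ≤ r^s * n.choose k := by
  intro s
  induction s with
  | zero => intro _; simp
  | succ s ih =>
    intro hs1
    have hs : s ≤ k := by omega
    have hB := ih hs
    have hj1 : (k - (s+1)) + 1 = k - s := by omega
    have hjn : k - (s+1) < n := by omega
    have hid : n.choose (k - s) * (k - s) = n.choose (k - (s+1)) * (n - (k - (s+1))) := by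
      have h := Nat.choose_succ_right_eq n (k - (s+1))
      rw [hj1] at h
      exact h
    have hc1 : ((k - s : ℕ) : ℝ) = (k:ℝ) - s := by
      rw [Nat.cast_sub hs]
    have hc2 : ((n - (k - (s+1)) : ℕ) : ℝ) = (n:ℝ) - ((k - (s+1) : ℕ):ℝ) := by
      rw [Nat.cast_sub (le_of_lt hjn)]
    have hidR : (n.choose (k-s) : ℝ) * ((k:ℝ) - s)
        = (n.choose (k - (s+1)) : ℝ) * ((n:ℝ) - ((k - (s+1) : ℕ):ℝ)) := by
      rw [← hc1, ← hc2]
      exact_mod_cast hid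
    have hd : (0:ℝ) < (n:ℝ) - ((k - (s+1) : ℕ):ℝ) := by
      have : ((k - (s+1):ℕ):ℝ) < (n:ℝ) := by exact_mod_cast hjn
      linarith
    have hjk : ((k - (s+1):ℕ):ℝ) ≤ (k:ℝ) := by
      exact_mod_cast Nat.sub_le k (s+1)
    have h1 : ((k:ℝ) - s) ≤ r * ((n:ℝ) - ((k - (s+1):ℕ):ℝ)) := by
      have hmono : r * ((n:ℝ) - (k:ℝ)) ≤ r * ((n:ℝ) - ((k - (s+1):ℕ):ℝ)) := by
        apply mul_le_mul_of_nonneg_left _ hr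
        linarith
      have hks : (k:ℝ) - s ≤ (k:ℝ) := by
        have : (0:ℝ) ≤ (s:ℝ) := Nat.cast_nonneg s
        linarith
      linarith
    have h0ks : (0:ℝ) ≤ (k:ℝ) - s := by
      have : (s:ℝ) ≤ (k:ℝ) := by exact_mod_cast hs
      linarith
    have h2 : (n.choose (k - (s+1)) : ℝ) * ((n:ℝ) - ((k - (s+1):ℕ):ℝ))
        ≤ (r^(s+1) * n.choose k) * ((n:ℝ) - ((k - (s+1):ℕ):ℝ)) := by
      rw [← hidR]
      calc (n.choose (k-s) : ℝ) * ((k:ℝ) - s)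
          ≤ (r^s * n.choose k) * (r * ((n:ℝ) - ((k - (s+1):ℕ):ℝ))) := by
            apply mul_le_mul hB h1 h0ks
            positivity
        _ = (r^(s+1) * n.choose k) * ((n:ℝ) - ((k - (s+1):ℕ):ℝ)) := by ring
    exact le_of_mul_le_mul_right h2 hd

lemma cardR_ratio (n k : ℕ) (hkn : k ≤ n) (r : ℝ) (hr : 0 ≤ r)
    (hkey : (k:ℝ) ≤ r * ((n:ℝ) - (k:ℝ))) (s : ℕ) (hs : s ≤ k) :
    ((Rset n (k-s)).card : ℝ) ≤ (2*r)^s * (Rset n k).card := by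
  have e1 : (Rset n (k-s)).card = n.choose (k-s) * 2^(n-(k-s)) := card_R n (k-s)
  have e2 : (Rset n k).card = n.choose k * 2^(n-k) := card_R n k
  rw [e1, e2]
  have hexp : n - (k-s) = (n-k) + s := by omega
  rw [hexp]
  push_cast [pow_add]
  calc (n.choose (k-s) : ℝ) * (2^(n-k) * 2^s)
      ≤ (r^s * n.choose k) * (2^(n-k) * 2^s) := by
        apply mul_le_mul_of_nonneg_right (choose_ratio n k hkn r hr hkey s hs)
        positivity
    _ = (2*r)^s * ((n.choose k : ℝ) * 2^(n-k)) := by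
        rw [mul_pow]; ring

end Arith

theorem useNum_fixed_stars_bound' {n m w k : ℕ} (C : Fin m → Term n) (α : ℝ)
    (hα0 : 0 < α) (hα1 : α < 1) (hk : (k : ℝ) = α * n)
    (hw : ∀ j, termWidth (C j) ≤ w)
    (hm : 0 < m) (hlast : C ⟨m - 1, Nat.sub_lt hm one_pos⟩ = fun _ => none) :
    (∑ ρ ∈ Finset.univ.filter (fun ρ : Restriction n => stars ρ = k), (useNum C ρ : ℝ)) /
      ((Finset.univ.filter (fun ρ : Restriction n => stars ρ = k)).card : ℝ) ≤
      (4 / (1 - α)) ^ w := by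
  classical
  have h1α : (0:ℝ) < 1 - α := by linarith
  set r : ℝ := α / (1 - α) with hrdef
  have hr : 0 ≤ r := by positivity
  have hkn : k ≤ n := by
    have h : (k:ℝ) ≤ (n:ℝ) := by
      rw [hk]
      nlinarith [Nat.cast_nonneg (α := ℝ) n]
    exact_mod_cast h
  have hkey : (k:ℝ) ≤ r * ((n:ℝ) - (k:ℝ)) := by
    rw [hk]
    have h2 : (n:ℝ) - α*(n:ℝ) = (1-α)*(n:ℝ) := by ring
    rw [h2, hrdef]
    have h3 : α/(1-α) * ((1-α)*(n:ℝ)) = α*(n:ℝ) := by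
      field_simp
    rw [h3]
  have hRset : Finset.univ.filter (fun ρ : Restriction n => stars ρ = k) = Rset n k := rfl
  rw [hRset]
  have hcard : (Rset n k).card = n.choose k * 2^(n-k) := card_R n k
  have hpos : (0:ℝ) < ((Rset n k).card : ℝ) := by
    rw [hcard]
    have h4 : 0 < n.choose k := Nat.choose_pos hkn
    positivity
  rw [div_le_iff₀ hpos]
  have hnum : (∑ ρ ∈ Rset n k, (useNum C ρ : ℝ)) = ((∑ ρ ∈ Rset n k, useNum C ρ : ℕ) : ℝ) := by
    push_cast; rfl
  rw [hnum]
  have htot := total_bound C hm hlast w k hw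
  calc ((∑ ρ ∈ Rset n k, useNum C ρ : ℕ) : ℝ)
      ≤ ((∑ s ∈ range (w+1), w.choose s * (if s ≤ k then (Rset n (k-s)).card else 0) : ℕ) : ℝ) := by
        exact_mod_cast htot
    _ = ∑ s ∈ range (w+1), (w.choose s : ℝ) * (if s ≤ k then ((Rset n (k-s)).card : ℝ) else 0) := by
        push_cast [apply_ite (Nat.cast : ℕ → ℝ)]
        rfl
    _ ≤ ∑ s ∈ range (w+1), (w.choose s : ℝ) * ((2*r)^s * ((Rset n k).card : ℝ)) := by
        apply Finset.sum_le_sum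
        intro s _
        apply mul_le_mul_of_nonneg_left _ (by positivity)
        by_cases hs : s ≤ k
        · simp only [hs, if_true]
          exact cardR_ratio n k hkn r hr hkey s hs
        · simp only [hs, if_false]
          positivity
    _ = (∑ s ∈ range (w+1), (w.choose s : ℝ) * (2*r)^s) * ((Rset n k).card : ℝ) := by
        rw [Finset.sum_mul]
        apply Finset.sum_congr rfl
        intro s _
        ring
    _ = (2*r+1)^w * ((Rset n k).card : ℝ) := by
        rw [add_pow]
        congr 1
        apply Finset.sum_congr rfl
        intro s _
        simp [mul_comm]
    _ ≤ (4/(1-α))^w * ((Rset n k).card : ℝ) := by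
        apply mul_le_mul_of_nonneg_right _ (le_of_lt hpos)
        apply pow_le_pow_left₀ (by positivity)
        have h5 : 2*r + 1 = (1+α)/(1-α) := by
          rw [hrdef]; field_simp; ring
        rw [h5]
        exact (div_le_div_iff_of_pos_right h1α).2 (by linarith)

theorem useNum_fixed_stars_bound {n m w k : ℕ} (C : Fin m → Term n) (α : ℝ)
    (hα0 : 0 < α) (hα1 : α < 1) (hk : (k : ℝ) = α * n)
    (hw : ∀ j, termWidth (C j) ≤ w)
    (hm : 0 < m) (hlast : C ⟨m - 1, Nat.sub_lt hm one_pos⟩ = fun _ => none) :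
    (∑ ρ ∈ Finset.univ.filter (fun ρ : Restriction n => stars ρ = k), (useNum C ρ : ℝ)) /
      ((Finset.univ.filter (fun ρ : Restriction n => stars ρ = k)).card : ℝ) ≤
      (4 / (1 - α)) ^ w := by
  exact useNum_fixed_stars_bound' C α hα0 hα1 hk hw hm hlast
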